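/- Let M_1 = (V, I_1), …, M_k = (V, I_k) be k matroids over a common finite ground set V, let (S_1, …, S_k) be a partition of S ⊆ V with S_i ∈ I_i for all i ∈ [k], and let s, v₁, v₂, …, v_{l−1}, t_j be a shortest (s, T)-path in the compressed exchange graph G(S_1, …, S_k). Then S' = S + v₁ is a partitionable set. -/

import Mathlib

/-- A matroid on a finite ground set `V`, given by its family of independent sets. -/
structure FinMatroid (V : Type*) [DecidableEq V] [Fintype V] where
  Indep : Finset V → Prop
  indep_empty : Indep ∅
  indep_subset : ∀ ⦃S T : Finset V⦄, Indep S → T ⊆ S → Indep T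
  indep_aug : ∀ ⦃S T : Finset V⦄, Indep S → Indep T → T.card < S.card →
    ∃ x ∈ S \ T, Indep (insert x T)

/-- `S` is partitionable w.r.t. the matroids `M i`: it can be partitioned into
sets `P i` with `P i` independent in `M i`. -/
def Partitionable {V ι : Type*} [DecidableEq V] [Fintype V] [DecidableEq ι] [Fintype ι]
    (M : ι → FinMatroid V) (S : Finset V) : Prop :=
  ∃ P : ι → Finset V, (∀ i, (M i).Indep (P i)) ∧
    (∀ i j, i ≠ j → Disjoint (P i) (P j)) ∧ Finset.univ.biUnion P = S

/-- `reachIn Adj n x y` : there is a directed walk with exactly `n` edges from `x` to `y`. -/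
def reachIn {α : Type*} (Adj : α → α → Prop) : ℕ → α → α → Prop
  | 0, x, y => x = y
  | n + 1, x, y => ∃ z, Adj x z ∧ reachIn Adj n z y

/-- Distance (number of edges of a shortest directed path) from `x` to `y`; `⊤` if none. -/
noncomputable def ddist {α : Type*} (Adj : α → α → Prop) (x y : α) : ℕ∞ :=
  sInf {n : ℕ∞ | ∃ m : ℕ, n = (m : ℕ∞) ∧ reachIn Adj m x y}

/-- Vertices of the compressed exchange graph: ground elements, a source `src`,
and one sink `snk i` for each index `i`. -/
inductive CVert (V ι : Type*) where
  | elt : V → CVert V ι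
  | src : CVert V ι
  | snk : ι → CVert V ι

/-- The compressed exchange graph `G(S₁, …, S_k)` relative to the partition `P`. -/
def compAdj {V ι : Type*} [DecidableEq V] [Fintype V] [DecidableEq ι] [Fintype ι]
    (M : ι → FinMatroid V) (P : ι → Finset V) : CVert V ι → CVert V ι → Prop
  | CVert.elt v, CVert.elt u =>
      ∃ i, u ∈ P i ∧ ¬ (M i).Indep (insert v (P i)) ∧
        (M i).Indep (insert v ((P i).erase u))
  | CVert.src, CVert.elt v => v ∉ Finset.univ.biUnion P
  | CVert.elt v, CVert.snk i => v ∉ P i ∧ (M i).Indep (insert v (P i))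
  | _, _ => False

namespace MyAux

set_option linter.unusedSectionVars false

section Matroid
variable {V : Type*} [DecidableEq V] [Fintype V] {M : FinMatroid V}

lemma not_mem_of_dep_insert {A : Finset V} {x : V} (hA : M.Indep A)
    (h : ¬ M.Indep (insert x A)) : x ∉ A := by
  intro hx
  exact h (by rwa [Finset.insert_eq_self.2 hx])

lemma exists_circuit {X : Finset V} (hX : ¬ M.Indep X) :
    ∃ C ⊆ X, ¬ M.Indep C ∧ ∀ u ∈ C, M.Indep (C.erase u) := by
  induction X using Finset.strongInduction with
  | _ X ih =>
    by_cases h : ∃ u ∈ X, ¬ M.Indep (X.erase u)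
    · obtain ⟨u, hu, hdep⟩ := h
      obtain ⟨C, hC1, hC2⟩ := ih (X.erase u) (Finset.erase_ssubset hu) hdep
      exact ⟨C, hC1.trans (Finset.erase_subset _ _), hC2⟩
    · push_neg at h
      exact ⟨X, Finset.Subset.refl _, hX, h⟩

lemma not_mem_base_of_circuit {B C : Finset V} {x : V} (hB : M.Indep B)
    (hC : C ⊆ insert x B) (hCdep : ¬ M.Indep C) : x ∉ B := by
  intro hx
  rw [Finset.insert_eq_self.2 hx] at hC
  exact hCdep (M.indep_subset hB hC)

/-- key exchange lemma: removing a circuit element of the unique circuit keeps independence -/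
lemma indep_insert_erase_of_mem_circuit {B C : Finset V} {x u : V} (hB : M.Indep B)
    (hC : C ⊆ insert x B) (hCdep : ¬ M.Indep C) (hCmin : ∀ w ∈ C, M.Indep (C.erase w))
    (hu : u ∈ C) (hux : u ≠ x) : M.Indep (insert x (B.erase u)) := by
  classical
  have hxB : x ∉ B := not_mem_base_of_circuit hB hC hCdep
  have huB : u ∈ B := by
    have := hC hu
    rw [Finset.mem_insert] at this
    tauto
  by_contra hdep
  set D := insert x (B.erase u) with hD
  have hCuD : C.erase u ⊆ D := by
    intro a ha
    have haC := Finset.mem_of_mem_erase ha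
    have hau : a ≠ u := Finset.ne_of_mem_erase ha
    have := hC haC
    rw [Finset.mem_insert] at this ⊢
    rcases this with h | h
    · exact Or.inl h
    · exact Or.inr (Finset.mem_erase.2 ⟨hau, h⟩)
  set F := D.powerset.filter (fun J => M.Indep J ∧ C.erase u ⊆ J) with hF
  have hFne : F.Nonempty := ⟨C.erase u, by
    simp only [hF, Finset.mem_filter, Finset.mem_powerset]
    exact ⟨hCuD, hCmin u hu, Finset.Subset.refl _⟩⟩
  obtain ⟨J, hJF, hJmax⟩ := Finset.exists_max_image F Finset.card hFne
  simp only [hF, Finset.mem_filter, Finset.mem_powerset] at hJF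
  obtain ⟨hJD, hJind, hJC⟩ := hJF
  have hDcard : D.card = B.card := by
    rw [hD, Finset.card_insert_of_notMem (fun hx' => hxB (Finset.mem_of_mem_erase hx')),
      Finset.card_erase_of_mem huB]
    have : 1 ≤ B.card := Finset.card_pos.2 ⟨u, huB⟩
    omega
  have hJlt : J.card < B.card := by
    rcases lt_or_eq_of_le (Finset.card_le_card hJD) with h | h
    · omega
    · exact absurd (M.indep_subset hJind (Finset.Subset.refl J)) (by
        rw [Finset.eq_of_subset_of_card_le hJD (le_of_eq h.symm)] at hJind
        exact absurd hJind hdep)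
  obtain ⟨a, haBJ, haind⟩ := M.indep_aug hB hJind hJlt
  rw [Finset.mem_sdiff] at haBJ
  obtain ⟨haB, haJ⟩ := haBJ
  by_cases hau : a = u
  · subst hau
    have : C ⊆ insert a J := by
      intro c hc
      rcases eq_or_ne c a with rfl | hca
      · exact Finset.mem_insert_self _ _
      · exact Finset.mem_insert_of_mem (hJC (Finset.mem_erase.2 ⟨hca, hc⟩))
    exact hCdep (M.indep_subset haind this)
  · have hmem : insert a J ∈ F := by
      simp only [hF, Finset.mem_filter, Finset.mem_powerset]
      refine ⟨Finset.insert_subset ?_ hJD, haind, hJC.trans (Finset.subset_insert _ _)⟩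
      exact Finset.mem_insert_of_mem (Finset.mem_erase.2 ⟨hau, haB⟩)
    have := hJmax _ hmem
    rw [Finset.card_insert_of_notMem haJ] at this
    omega

lemma indep_insert_erase_iff {B C : Finset V} {x u : V} (hB : M.Indep B)
    (hC : C ⊆ insert x B) (hCdep : ¬ M.Indep C) (hCmin : ∀ w ∈ C, M.Indep (C.erase w))
    (hu : u ∈ B) : M.Indep (insert x (B.erase u)) ↔ u ∈ C := by
  have hxB : x ∉ B := not_mem_base_of_circuit hB hC hCdep
  constructor
  · intro hind
    by_contra huC
    refine hCdep (M.indep_subset hind ?_)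
    intro c hc
    have := hC hc
    rw [Finset.mem_insert] at this ⊢
    rcases this with h | h
    · exact Or.inl h
    · exact Or.inr (Finset.mem_erase.2 ⟨fun hcu => huC (hcu ▸ hc), h⟩)
  · intro huC
    exact indep_insert_erase_of_mem_circuit hB hC hCdep hCmin huC
      (fun h => hxB (h ▸ hu))


/-- perform the exchanges in `l` on `A`, first pair first. -/
def exchList (l : List (V × V)) (A : Finset V) : Finset V :=
  l.foldl (fun B p => insert p.1 (B.erase p.2)) A

lemma exchList_nil (A : Finset V) : exchList ([] : List (V × V)) A = A := rfl

lemma exchList_cons (p : V × V) (l : List (V × V)) (A : Finset V) :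
    exchList (p :: l) A = exchList l (insert p.1 (A.erase p.2)) := rfl

/-- The triangular exchange lemma. -/
lemma tri : ∀ (l : List (V × V)) (A : Finset V), M.Indep A →
    (∀ p ∈ l, p.2 ∈ A ∧ ¬ M.Indep (insert p.1 A) ∧ M.Indep (insert p.1 (A.erase p.2))) →
    List.Pairwise (fun p q : V × V => ¬ M.Indep (insert q.1 (A.erase p.2))) l →
    (l.map Prod.fst).Nodup →
    M.Indep (exchList l A) := by
  intro l
  induction l with
  | nil => intro A hA _ _ _; exact hA
  | cons p₀ l ih =>
    intro A hA hpairs hpw hnd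
    obtain ⟨hy₀A, hdep₀, hex₀⟩ := hpairs p₀ List.mem_cons_self
    have hx₀A : p₀.1 ∉ A := not_mem_of_dep_insert hA hdep₀
    set B := insert p₀.1 (A.erase p₀.2) with hBdef
    have hB : M.Indep B := hex₀
    rw [List.pairwise_cons] at hpw
    obtain ⟨hpw₀, hpwt⟩ := hpw
    rw [List.map_cons, List.nodup_cons] at hnd
    obtain ⟨hx₀nd, hndt⟩ := hnd
    rw [exchList_cons]
    -- facts about each q ∈ l
    have key : ∀ q ∈ l, ∃ C, C ⊆ insert q.1 A ∧ ¬ M.Indep C ∧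
        (∀ w ∈ C, M.Indep (C.erase w)) ∧ p₀.2 ∉ C ∧ C ⊆ insert q.1 B ∧ q.1 ∉ B := by
      intro q hq
      obtain ⟨hyA, hdep, hex⟩ := hpairs q (List.mem_cons_of_mem _ hq)
      obtain ⟨C, hCsub, hCdep, hCmin⟩ := exists_circuit hdep
      have hy₀ : p₀.2 ∉ C := by
        rw [← indep_insert_erase_iff hA hCsub hCdep hCmin hy₀A]
        exact hpw₀ q hq
      have hxA : q.1 ∉ A := not_mem_of_dep_insert hA hdep
      have hCsubB : C ⊆ insert q.1 B := by
        intro c hc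
        rcases Finset.mem_insert.1 (hCsub hc) with h | h
        · exact h ▸ Finset.mem_insert_self _ _
        · refine Finset.mem_insert_of_mem (Finset.mem_insert_of_mem ?_)
          exact Finset.mem_erase.2 ⟨fun hc2 => hy₀ (hc2 ▸ hc), h⟩
      have hq1B : q.1 ∉ B := by
        rw [hBdef]
        simp only [Finset.mem_insert, Finset.mem_erase]
        rintro (h | ⟨-, h⟩)
        · exact hx₀nd (by
            rcases List.mem_map.2 ⟨q, hq, rfl⟩ with hmem
            exact h ▸ hmem)
        · exact hxA h
      exact ⟨C, hCsub, hCdep, hCmin, hy₀, hCsubB, hq1B⟩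
    refine ih B hB ?_ ?_ hndt
    · intro q hq
      obtain ⟨hyA, hdep, hex⟩ := hpairs q (List.mem_cons_of_mem _ hq)
      obtain ⟨C, hCsub, hCdep, hCmin, hy₀C, hCsubB, hq1B⟩ := key q hq
      have hy2C : q.2 ∈ C := (indep_insert_erase_iff hA hCsub hCdep hCmin hyA).1 hex
      have hy2B : q.2 ∈ B := by
        refine Finset.mem_insert_of_mem (Finset.mem_erase.2 ⟨fun h => hy₀C (h ▸ hy2C), hyA⟩)
      refine ⟨hy2B, fun hind => hCdep (M.indep_subset hind hCsubB), ?_⟩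
      exact (indep_insert_erase_iff hB hCsubB
        (fun h => hCdep h) hCmin hy2B).2 hy2C
    · refine List.Pairwise.imp_of_mem ?_ hpwt
      intro p q hp hq hR
      obtain ⟨hyA, hdepp, hexp⟩ := hpairs p (List.mem_cons_of_mem _ hp)
      obtain ⟨C, hCsub, hCdep, hCmin, hy₀C, hCsubB, hq1B⟩ := key q hq
      have hp2y₀ : p.2 ≠ p₀.2 := by
        intro h
        exact (hpw₀ p hp) (h ▸ hexp)
      have hp2B : p.2 ∈ B :=
        Finset.mem_insert_of_mem (Finset.mem_erase.2 ⟨hp2y₀, hyA⟩)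
      intro hind
      have hp2C : p.2 ∈ C := (indep_insert_erase_iff hB hCsubB hCdep hCmin hp2B).1 hind
      exact hR ((indep_insert_erase_iff hA hCsub hCdep hCmin hyA).2 hp2C)


/-- transferring exchange properties from base `A` to base `insert w A`. -/
lemma indep_insert_erase_transfer {A : Finset V} {x w u : V} (hA : M.Indep A)
    (hdep : ¬ M.Indep (insert x A)) (hw : M.Indep (insert w A)) (hu : u ∈ A) :
    M.Indep (insert x ((insert w A).erase u)) ↔ M.Indep (insert x (A.erase u)) := by
  by_cases hwA : w ∈ A
  · rw [Finset.insert_eq_self.2 hwA]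
  · obtain ⟨C, hCsub, hCdep, hCmin⟩ := exists_circuit hdep
    have hCsub' : C ⊆ insert x (insert w A) := hCsub.trans
      (Finset.insert_subset_insert _ (Finset.subset_insert _ _))
    rw [indep_insert_erase_iff hA hCsub hCdep hCmin hu,
      indep_insert_erase_iff hw hCsub' hCdep hCmin (Finset.mem_insert_of_mem hu)]

/-- also need: dep transfers -/
lemma dep_insert_transfer {A : Finset V} {x w : V}
    (hdep : ¬ M.Indep (insert x A)) :
    ¬ M.Indep (insert x (insert w A)) := fun h =>
  hdep (M.indep_subset h (Finset.insert_subset_insert _ (Finset.subset_insert _ _)))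

lemma mem_exchList : ∀ (l : List (V × V)) (A : Finset V),
    (∀ p ∈ l, p.2 ∈ A) → (∀ p ∈ l, p.1 ∉ A) →
    (l.map Prod.fst).Nodup → (l.map Prod.snd).Nodup →
    ∀ u, (u ∈ exchList l A ↔
      ((u ∈ A ∨ u ∈ l.map Prod.fst) ∧ u ∉ l.map Prod.snd)) := by
  intro l
  induction l with
  | nil => intro A _ _ _ _ u; simp [exchList]
  | cons p l ih =>
    intro A hsnd hfst hndf hnds u
    rw [List.map_cons, List.nodup_cons] at hndf hnds
    have hyA : p.2 ∈ A := hsnd p List.mem_cons_self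
    have hxA : p.1 ∉ A := hfst p List.mem_cons_self
    set B := insert p.1 (A.erase p.2) with hBdef
    have h1 : ∀ q ∈ l, q.2 ∈ B := by
      intro q hq
      have h2 : q.2 ∈ A := hsnd q (List.mem_cons_of_mem _ hq)
      refine Finset.mem_insert_of_mem (Finset.mem_erase.2 ⟨?_, h2⟩)
      intro h; exact hnds.1 (h ▸ List.mem_map.2 ⟨q, hq, rfl⟩)
    have h2 : ∀ q ∈ l, q.1 ∉ B := by
      intro q hq
      simp only [hBdef, Finset.mem_insert, Finset.mem_erase]
      rintro (h | ⟨-, h⟩)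
      · exact hndf.1 (h ▸ List.mem_map.2 ⟨q, hq, rfl⟩)
      · exact hfst q (List.mem_cons_of_mem _ hq) h
    rw [exchList_cons, ih B h1 h2 hndf.2 hnds.2 u]
    simp only [hBdef, Finset.mem_insert, Finset.mem_erase, List.map_cons,
      List.mem_cons, not_or]
    constructor
    · rintro ⟨h | h, hns⟩
      · rcases h with rfl | ⟨hne, hmem⟩
        · refine ⟨Or.inr (Or.inl rfl), ?_, hns⟩
          intro h'
          exact hxA (h' ▸ hyA)
        · exact ⟨Or.inl hmem, hne, hns⟩
      · refine ⟨Or.inr (Or.inr h), ?_, hns⟩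
        intro h'
        subst h'
        obtain ⟨q, hq, hq2⟩ := List.mem_map.1 h
        exact (hfst q (List.mem_cons_of_mem _ hq)) (hq2 ▸ hyA)
    · rintro ⟨h | h, hne, hns⟩
      · rcases eq_or_ne u p.1 with rfl | hu1
        · exact ⟨Or.inl (Or.inl rfl), hns⟩
        · exact ⟨Or.inl (Or.inr ⟨hne, h⟩), hns⟩
      · rcases h with rfl | h
        · exact ⟨Or.inl (Or.inl rfl), hns⟩
        · exact ⟨Or.inr h, hns⟩


end Matroid

section Graph
variable {α : Type*} {Adj : α → α → Prop}

lemma reachIn_trans : ∀ {n k : ℕ} {x y z : α}, reachIn Adj n x y →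
    reachIn Adj k y z → reachIn Adj (n + k) x z := by
  intro n
  induction n with
  | zero =>
    intro k x y z h h2
    rw [Nat.zero_add]
    exact h ▸ h2
  | succ n ih =>
    rintro k x y z ⟨w, hxw, hr⟩ h2
    rw [show n + 1 + k = (n + k) + 1 from by omega]
    exact ⟨w, hxw, ih hr h2⟩

lemma reachIn_snoc : ∀ {n : ℕ} {x y z : α}, reachIn Adj n x y → Adj y z →
    reachIn Adj (n + 1) x z := by
  intro n
  induction n with
  | zero => intro x y z h hyz; exact ⟨z, h ▸ hyz, rfl⟩
  | succ n ih =>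
    rintro x y z ⟨w, hxw, hr⟩ hyz
    exact ⟨w, hxw, ih hr hyz⟩

lemma chain'_reach {l : List α} (h : List.Chain' Adj l) (p : ℕ) (hp : p < l.length) :
    ∀ q, p ≤ q → ∀ (hq : q < l.length), reachIn Adj (q - p) (l[p]'hp) (l[q]'hq) := by
  intro q hpq
  induction q, hpq using Nat.le_induction with
  | base =>
    intro hq
    rw [Nat.sub_self]
    exact rfl
  | succ q hq1 ih =>
    intro hq
    have hstep : Adj (l[q]'(by omega)) (l[q + 1]'hq) := by
      have := List.isChain_iff_getElem.1 h q (by omega)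
      simpa [List.get_eq_getElem] using this
    have := reachIn_snoc (ih (by omega)) hstep
    rwa [show q + 1 - p = (q - p) + 1 from by omega]

lemma ddist_le_reach {n : ℕ} {x y : α} (h : reachIn Adj n x y) :
    ddist Adj x y ≤ (n : ℕ∞) :=
  sInf_le ⟨n, rfl, h⟩


end Graph

end MyAux

/-- If `s, v₁, …, v_{l−1}, t_j` is a shortest `(s,T)`-path in the compressed exchange
graph, then `S + v₁` is partitionable. -/
theorem shortest_augmenting_path_partition {V ι : Type*} [DecidableEq V] [Fintype V]
    [DecidableEq ι] [Fintype ι] (M : ι → FinMatroid V) (P : ι → Finset V) (S : Finset V)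
    (hind : ∀ i, (M i).Indep (P i)) (hdisj : ∀ i j, i ≠ j → Disjoint (P i) (P j))
    (hS : Finset.univ.biUnion P = S)
    (j : ι) (vs : List V) (hne : vs ≠ []) (hnd : vs.Nodup)
    (hchain : List.Chain' (compAdj M P)
      (CVert.src :: (vs.map CVert.elt ++ [CVert.snk j])))
    (hshort : (⨅ i : ι, ddist (compAdj M P) CVert.src (CVert.snk i))
      = ((vs.length + 1 : ℕ) : ℕ∞)) :
    Partitionable M (insert (vs.head hne) S) := by
  classical
  set m := vs.length with hmdef
  have hm : 0 < m := List.length_pos_iff.2 hne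
  set d := vs.head hne with hddef
  set v : ℕ → V := fun p => vs.getD p d with hvdef
  have hv : ∀ p, ∀ (hp : p < m), v p = vs[p]'(by omega) := by
    intro p hp
    rw [hvdef]
    exact List.getD_eq_getElem vs d (by omega)
  have hvhead : vs.head hne = v 0 := by
    rw [hv 0 hm, List.head_eq_getElem]
  have hvinj : ∀ a b, a < m → b < m → v a = v b → a = b := by
    intro a b ha hb hab
    rw [hv a ha, hv b hb] at hab
    exact hnd.getElem_inj_iff.1 hab
  set L := (CVert.src :: (vs.map CVert.elt ++ [CVert.snk j]) : List (CVert V ι)) with hLdef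
  have hLlen : L.length = m + 2 := by
    simp only [hLdef, List.length_cons, List.length_append, List.length_map,
      List.length_singleton, List.length_nil]
    omega
  have hL0 : L[0]'(by rw [hLlen]; omega) = CVert.src := rfl
  have hgc : ∀ (a b : ℕ) (h : a = b) (ha : a < L.length), L[a]'ha = L[b]'(h ▸ ha) := by
    intro a b h ha
    subst h
    rfl
  have hLget : ∀ p, ∀ (hp : p < m), L[p+1]'(by rw [hLlen]; omega) = CVert.elt (v p) := by
    intro p hp
    have h1 : (CVert.src :: (vs.map CVert.elt ++ [CVert.snk j]))[p+1]'(by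
        simp only [List.length_cons, List.length_append, List.length_map,
          List.length_singleton, List.length_nil]
        omega) = CVert.elt (vs[p]'(by omega)) := by
      rw [List.getElem_cons_succ, List.getElem_append_left (by simp only [List.length_map]; omega),
        List.getElem_map]
    rw [hv p hp]
    exact h1
  have hLlast : L[m+1]'(by rw [hLlen]; omega) = CVert.snk j := by
    have h1 : (CVert.src :: (vs.map CVert.elt ++ [CVert.snk j]))[m+1]'(by
        simp only [List.length_cons, List.length_append, List.length_map,
          List.length_singleton, List.length_nil]
        omega) = CVert.snk j := by
      rw [List.getElem_cons_succ, List.getElem_append_right (by simp only [List.length_map]; omega)]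
      have h2 : ∀ (k : ℕ) (hk : k < ([CVert.snk j] : List (CVert V ι)).length),
          ([CVert.snk j] : List (CVert V ι))[k]'hk = CVert.snk j := by
        intro k hk
        have : k = 0 := by simpa using hk
        subst this
        rfl
      exact h2 _ _
    exact h1
  have hadj : ∀ a, ∀ (ha : a + 1 < m + 2),
      compAdj M P (L[a]'(by rw [hLlen]; omega)) (L[a+1]'(by rw [hLlen]; omega)) := by
    intro a ha
    have := List.isChain_iff_getElem.1 hchain a (by rw [hLlen]; omega)
    simpa [List.get_eq_getElem] using this
  have hfirst : v 0 ∉ S := by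
    have h := hadj 0 (by omega)
    rw [hL0, hLget 0 hm] at h
    have h2 : v 0 ∉ Finset.univ.biUnion P := h
    rwa [hS] at h2
  have hlastE : v (m-1) ∉ P j ∧ (M j).Indep (insert (v (m-1)) (P j)) := by
    have h := hadj ((m-1)+1) (by omega)
    rw [hLget (m-1) (by omega)] at h
    rw [hgc (m-1+1+1) (m+1) (by omega) (by rw [hLlen]; omega)] at h
    rw [hLlast] at h
    exact h
  have hedgeE : ∀ a, a + 1 < m →
      compAdj M P (CVert.elt (v a)) (CVert.elt (v (a+1))) := by
    intro a ha
    have h := hadj (a+1) (by omega)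
    rwa [hLget a (by omega), hLget (a+1) (by omega)] at h
  -- no shortcuts
  have NS : ∀ p q, p + 2 ≤ q → q < m →
      ¬ compAdj M P (CVert.elt (v p)) (CVert.elt (v q)) := by
    intro p q hpq hq hedge
    have r1 : reachIn (compAdj M P) (p + 1) CVert.src (CVert.elt (v p)) := by
      have := MyAux.chain'_reach hchain 0 (by rw [hLlen]; omega) (p+1) (by omega)
        (by rw [hLlen]; omega)
      rwa [hL0, hLget p (by omega), Nat.sub_zero] at this
    have r2 : reachIn (compAdj M P) (m - q) (CVert.elt (v q)) (CVert.snk j) := by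
      have := MyAux.chain'_reach hchain (q+1) (by rw [hLlen]; omega) (m+1) (by omega)
        (by rw [hLlen]; omega)
      rw [hLget q hq, hLlast] at this
      rwa [show m + 1 - (q + 1) = m - q from by omega] at this
    have r3 : reachIn (compAdj M P) (m - q + 1) (CVert.elt (v p)) (CVert.snk j) := by
      rw [show m - q + 1 = 1 + (m - q) from by omega]
      exact MyAux.reachIn_trans ⟨_, hedge, rfl⟩ r2
    have rtot := MyAux.reachIn_trans r1 r3
    have hle : (⨅ i, ddist (compAdj M P) CVert.src (CVert.snk i)) ≤
        (((p + 1) + (m - q + 1) : ℕ) : ℕ∞) :=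
      le_trans (iInf_le _ j) (MyAux.ddist_le_reach rtot)
    rw [hshort] at hle
    have : m + 1 ≤ (p + 1) + (m - q + 1) := by exact_mod_cast hle
    omega
  -- the index of the matroid containing an element
  have hPmem : ∀ {y : V}, y ∈ S → ∃ i, y ∈ P i := by
    intro y hy
    rw [← hS] at hy
    obtain ⟨i, -, h⟩ := Finset.mem_biUnion.1 hy
    exact ⟨i, h⟩
  have hSmem : ∀ {i : ι} {y : V}, y ∈ P i → y ∈ S := by
    intro i y hy
    rw [← hS]
    exact Finset.mem_biUnion.2 ⟨i, Finset.mem_univ _, hy⟩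
  set idx : V → ι := fun y => if h : ∃ i, y ∈ P i then h.choose else j with hidxdef
  have hidx : ∀ y i, y ∈ P i → idx y = i := by
    intro y i hy
    have hex : ∃ i, y ∈ P i := ⟨i, hy⟩
    simp only [hidxdef, dif_pos hex]
    by_contra hne'
    exact Finset.disjoint_left.1 (hdisj _ _ hne') hex.choose_spec hy
  -- consecutive pairs
  set pairs := vs.zip vs.tail with hpairsdef
  have hplen : pairs.length = m - 1 := by
    rw [hpairsdef, List.length_zip, List.length_tail]
    omega
  have hpget : ∀ a, ∀ (ha : a < m - 1), pairs[a]'(by omega) = (v a, v (a+1)) := by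
    intro a ha
    have h1 : (vs.zip vs.tail)[a]'(by
        rw [List.length_zip, List.length_tail]; omega) =
        (vs[a]'(by omega), vs.tail[a]'(by rw [List.length_tail]; omega)) :=
      List.getElem_zip
    rw [List.getElem_tail] at h1
    rw [← hv a (by omega), ← hv (a+1) (by omega)] at h1
    exact h1
  have hmem_pairs : ∀ pq : V × V, pq ∈ pairs ↔ ∃ a, a + 1 < m ∧ pq = (v a, v (a+1)) := by
    intro pq
    rw [List.mem_iff_getElem]
    constructor
    · rintro ⟨a, ha, rfl⟩
      exact ⟨a, by omega, hpget a (by omega)⟩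
    · rintro ⟨a, ha, rfl⟩
      exact ⟨a, by omega, hpget a (by omega)⟩
  have hpp : ∀ a, a + 1 < m →
      v (a+1) ∈ P (idx (v (a+1))) ∧
      ¬ (M (idx (v (a+1)))).Indep (insert (v a) (P (idx (v (a+1))))) ∧
      (M (idx (v (a+1)))).Indep (insert (v a) ((P (idx (v (a+1)))).erase (v (a+1)))) := by
    intro a ha
    obtain ⟨i, h1, h2, h3⟩ := hedgeE a ha
    rw [hidx _ i h1]
    exact ⟨h1, h2, h3⟩
  set l : ι → List (V × V) := fun i => (pairs.filter (fun pq => idx pq.2 = i)).reverse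
    with hldef
  have hmem_l : ∀ (i : ι) (pq : V × V),
      pq ∈ l i ↔ ∃ a, a + 1 < m ∧ idx (v (a+1)) = i ∧ pq = (v a, v (a+1)) := by
    intro i pq
    simp only [hldef, List.mem_reverse, List.mem_filter, decide_eq_true_eq, hmem_pairs]
    constructor
    · rintro ⟨⟨a, ha, rfl⟩, hi⟩
      exact ⟨a, ha, hi, rfl⟩
    · rintro ⟨a, ha, hi, rfl⟩
      exact ⟨⟨a, ha, rfl⟩, hi⟩
  set A : ι → Finset V := fun i => if i = j then insert (v (m-1)) (P j) else P i with hAdef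
  have hAj : A j = insert (v (m-1)) (P j) := by simp [hAdef]
  have hAn : ∀ i, i ≠ j → A i = P i := by
    intro i h
    simp [hAdef, h]
  have hPA : ∀ i : ι, P i ⊆ A i := by
    intro i
    by_cases h : i = j
    · subst h; rw [hAj]; exact Finset.subset_insert _ _
    · rw [hAn i h]
  have hAind : ∀ i, (M i).Indep (A i) := by
    intro i
    by_cases h : i = j
    · subst h; rw [hAj]; exact hlastE.2
    · rw [hAn i h]; exact hind i
  -- conditions for tri
  have hconds : ∀ i : ι, ∀ pq ∈ l i, pq.2 ∈ A i ∧ ¬ (M i).Indep (insert pq.1 (A i)) ∧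
      (M i).Indep (insert pq.1 ((A i).erase pq.2)) := by
    intro i pq hpq
    obtain ⟨a, ha, hi, rfl⟩ := (hmem_l i pq).1 hpq
    obtain ⟨h1, h2, h3⟩ := hpp a ha
    rw [hi] at h1 h2 h3
    by_cases hij : i = j
    · subst hij
      rw [hAj]
      exact ⟨Finset.mem_insert_of_mem h1, MyAux.dep_insert_transfer h2,
        (MyAux.indep_insert_erase_transfer (hind i) h2 hlastE.2 h1).2 h3⟩
    · rw [hAn i hij]
      exact ⟨h1, h2, h3⟩
  -- pairwise condition
  have hpw : ∀ i : ι, List.Pairwise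
      (fun p q : V × V => ¬ (M i).Indep (insert q.1 ((A i).erase p.2))) (l i) := by
    intro i
    simp only [hldef]
    rw [List.pairwise_reverse]
    have hpw0 : List.Pairwise (fun p q : V × V => idx p.2 = i → idx q.2 = i →
        ¬ (M i).Indep (insert p.1 ((A i).erase q.2))) pairs := by
      rw [List.pairwise_iff_get]
      intro a b hab
      have hal : (a : ℕ) < m - 1 := by have := a.isLt; omega
      have hbl : (b : ℕ) < m - 1 := by have := b.isLt; omega
      simp only [List.get_eq_getElem]
      rw [hpget a hal, hpget b hbl]
      intro hia hib hcontra
      obtain ⟨ha1, ha2, -⟩ := hpp (a : ℕ) (by omega)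
      obtain ⟨hb1, -, -⟩ := hpp (b : ℕ) (by omega)
      rw [hia] at ha1 ha2
      rw [hib] at hb1
      have hind' : (M i).Indep (insert (v a) ((P i).erase (v (b+1)))) := by
        by_cases hij : i = j
        · subst hij
          rw [hAj] at hcontra
          exact (MyAux.indep_insert_erase_transfer (hind i) ha2 hlastE.2 hb1).1 hcontra
        · rwa [hAn i hij] at hcontra
      exact NS a (b+1) (by have : (a:ℕ) < (b:ℕ) := hab; omega) (by omega)
        ⟨i, hb1, ha2, hind'⟩
    refine List.Pairwise.imp_of_mem ?_
      (List.Pairwise.sublist List.filter_sublist hpw0)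
    intro p q hp hq hR
    rw [List.mem_filter, decide_eq_true_eq] at hp hq
    exact hR hp.2 hq.2
  -- nodup conditions
  have hndp1 : (pairs.map Prod.fst).Nodup := by
    have : List.Pairwise (· ≠ ·) (pairs.map Prod.fst) := by
      rw [List.pairwise_iff_get]
      intro a b hab
      have hal : (a : ℕ) < m - 1 := by have := a.isLt; simp [hplen] at this; omega
      have hbl : (b : ℕ) < m - 1 := by have := b.isLt; simp [hplen] at this; omega
      simp only [List.get_eq_getElem, List.getElem_map]
      rw [hpget a (by omega), hpget b (by omega)]
      intro heq
      have : (a : ℕ) = (b : ℕ) := hvinj a b (by omega) (by omega) heq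
      have : (a : ℕ) < (b : ℕ) := hab
      omega
    exact this
  have hndp2 : (pairs.map Prod.snd).Nodup := by
    have : List.Pairwise (· ≠ ·) (pairs.map Prod.snd) := by
      rw [List.pairwise_iff_get]
      intro a b hab
      have hal : (a : ℕ) < m - 1 := by have := a.isLt; simp [hplen] at this; omega
      have hbl : (b : ℕ) < m - 1 := by have := b.isLt; simp [hplen] at this; omega
      simp only [List.get_eq_getElem, List.getElem_map]
      rw [hpget a (by omega), hpget b (by omega)]
      intro heq
      have : (a : ℕ) + 1 = (b : ℕ) + 1 := hvinj _ _ (by omega) (by omega) heq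
      have : (a : ℕ) < (b : ℕ) := hab
      omega
    exact this
  have hndfst : ∀ i : ι, ((l i).map Prod.fst).Nodup := by
    intro i
    simp only [hldef]
    rw [List.map_reverse, List.nodup_reverse]
    exact List.Nodup.sublist (List.filter_sublist.map Prod.fst) hndp1
  have hndsnd : ∀ i : ι, ((l i).map Prod.snd).Nodup := by
    intro i
    simp only [hldef]
    rw [List.map_reverse, List.nodup_reverse]
    exact List.Nodup.sublist (List.filter_sublist.map Prod.snd) hndp2
  -- independence of the new parts
  have hindP' : ∀ i : ι, (M i).Indep (MyAux.exchList (l i) (A i)) := fun i =>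
    MyAux.tri (l i) (A i) (hAind i) (hconds i) (hpw i) (hndfst i)
  -- membership characterization of the new parts
  have hmemP' : ∀ (i : ι) (u : V), u ∈ MyAux.exchList (l i) (A i) ↔
      ((u ∈ A i ∨ u ∈ (l i).map Prod.fst) ∧ u ∉ (l i).map Prod.snd) := fun i =>
    MyAux.mem_exchList (l i) (A i) (fun p hp => (hconds i p hp).1)
      (fun p hp => MyAux.not_mem_of_dep_insert (hAind i) (hconds i p hp).2.1)
      (hndfst i) (hndsnd i)
  have hFst : ∀ (i : ι) (u : V), u ∈ (l i).map Prod.fst ↔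
      ∃ a, a + 1 < m ∧ idx (v (a+1)) = i ∧ u = v a := by
    intro i u
    rw [List.mem_map]
    constructor
    · rintro ⟨pq, hpq, rfl⟩
      obtain ⟨a, ha, hi, rfl⟩ := (hmem_l i pq).1 hpq
      exact ⟨a, ha, hi, rfl⟩
    · rintro ⟨a, ha, hi, rfl⟩
      exact ⟨(v a, v (a+1)), (hmem_l i _).2 ⟨a, ha, hi, rfl⟩, rfl⟩
  have hSnd : ∀ (i : ι) (u : V), u ∈ (l i).map Prod.snd ↔
      ∃ a, a + 1 < m ∧ idx (v (a+1)) = i ∧ u = v (a+1) := by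
    intro i u
    rw [List.mem_map]
    constructor
    · rintro ⟨pq, hpq, rfl⟩
      obtain ⟨a, ha, hi, rfl⟩ := (hmem_l i pq).1 hpq
      exact ⟨a, ha, hi, rfl⟩
    · rintro ⟨a, ha, hi, rfl⟩
      exact ⟨(v a, v (a+1)), (hmem_l i _).2 ⟨a, ha, hi, rfl⟩, rfl⟩
  have hInA : ∀ (i : ι) (u : V), u ∈ A i → u ∈ P i ∨ (i = j ∧ u = v (m-1)) := by
    intro i u hu
    by_cases h : i = j
    · subst h
      rw [hAj] at hu
      rcases Finset.mem_insert.1 hu with h | h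
      · exact Or.inr ⟨rfl, h⟩
      · exact Or.inl h
    · rw [hAn i h] at hu
      exact Or.inl hu
  have hsndP : ∀ (i : ι) (a : ℕ), a < m → 1 ≤ a → v a ∈ P i →
      v a ∈ (l i).map Prod.snd := by
    intro i a ha h1 hP
    refine (hSnd i _).2 ⟨a - 1, by omega, ?_, ?_⟩
    · rw [show a - 1 + 1 = a from by omega]
      exact hidx _ _ hP
    · rw [show a - 1 + 1 = a from by omega]
  refine ⟨fun i => MyAux.exchList (l i) (A i), hindP', ?_, ?_⟩
  · -- disjointness
    intro i i' hne'
    rw [Finset.disjoint_left]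
    intro u hu1 hu2
    rw [hmemP' i u] at hu1
    rw [hmemP' i' u] at hu2
    obtain ⟨h1, hs1⟩ := hu1
    obtain ⟨h2, hs2⟩ := hu2
    rcases h1 with h1 | h1
    · rcases h2 with h2 | h2
      · -- both in A
        rcases hInA i u h1 with hP1 | ⟨hij, hu1'⟩
        · rcases hInA i' u h2 with hP2 | ⟨hij', hu2'⟩
          · exact Finset.disjoint_left.1 (hdisj i i' hne') hP1 hP2
          · -- u ∈ P i, u = v (m-1)
            by_cases hm1 : m = 1
            · refine hfirst ?_
              have : v (m-1) = v 0 := by rw [show m - 1 = 0 from by omega]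
              exact this ▸ hu2' ▸ hSmem hP1
            · exact hs1 (hu2' ▸ hsndP i (m-1) (by omega) (by omega) (hu2' ▸ hP1))
        · rcases hInA i' u h2 with hP2 | ⟨hij', hu2'⟩
          · by_cases hm1 : m = 1
            · refine hfirst ?_
              have : v (m-1) = v 0 := by rw [show m - 1 = 0 from by omega]
              exact this ▸ hu1' ▸ hSmem hP2
            · exact hs2 (hu1' ▸ hsndP i' (m-1) (by omega) (by omega) (hu1' ▸ hP2))
          · exact hne' (hij.trans hij'.symm)
      · -- h1 : u ∈ A i, h2 : u is a fst for i'
        obtain ⟨a, ha, hia, rfl⟩ := (hFst i' u).1 h2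
        rcases hInA i _ h1 with hP1 | ⟨hij, hu1'⟩
        · by_cases ha0 : a = 0
          · subst ha0
            exact hfirst (hSmem hP1)
          · exact hs1 (hsndP i a (by omega) (by omega) hP1)
        · have := hvinj a (m-1) (by omega) (by omega) hu1'
          omega
    · rcases h2 with h2 | h2
      · obtain ⟨a, ha, hia, rfl⟩ := (hFst i u).1 h1
        rcases hInA i' _ h2 with hP2 | ⟨hij', hu2'⟩
        · by_cases ha0 : a = 0
          · subst ha0
            exact hfirst (hSmem hP2)
          · exact hs2 (hsndP i' a (by omega) (by omega) hP2)
        · have := hvinj a (m-1) (by omega) (by omega) hu2'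
          omega
      · obtain ⟨a, ha, hia, rfl⟩ := (hFst i u).1 h1
        obtain ⟨b, hb, hib, hab⟩ := (hFst i' _).1 h2
        have : a = b := hvinj a b (by omega) (by omega) hab
        subst this
        exact hne' (hia.symm.trans hib)
  · -- union
    rw [hddef, hvhead]
    apply Finset.ext
    intro u
    rw [Finset.mem_biUnion]
    constructor
    · rintro ⟨i, -, hu⟩
      rw [hmemP' i u] at hu
      obtain ⟨h1, -⟩ := hu
      rcases h1 with h1 | h1
      · rcases hInA i u h1 with hP | ⟨-, hu'⟩
        · exact Finset.mem_insert_of_mem (hSmem hP)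
        · by_cases hm1 : m = 1
          · have : v (m-1) = v 0 := by rw [show m - 1 = 0 from by omega]
            rw [hu', this]
            exact Finset.mem_insert_self _ _
          · have hmem := (hpp (m-2) (by omega)).1
            rw [show m - 2 + 1 = m - 1 from by omega] at hmem
            exact Finset.mem_insert_of_mem (hu' ▸ hSmem hmem)
      · obtain ⟨a, ha, -, rfl⟩ := (hFst i u).1 h1
        by_cases ha0 : a = 0
        · subst ha0
          exact Finset.mem_insert_self _ _
        · have hmem := (hpp (a-1) (by omega)).1
          rw [show a - 1 + 1 = a from by omega] at hmem
          exact Finset.mem_insert_of_mem (hSmem hmem)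
    · intro hu
      rcases Finset.mem_insert.1 hu with rfl | huS
      · -- u = v 0
        by_cases hm1 : m = 1
        · refine ⟨j, Finset.mem_univ _, ?_⟩
          rw [hmemP']
          constructor
          · left
            rw [hAj, show m - 1 = 0 from by omega]
            exact Finset.mem_insert_self _ _
          · intro hmem
            obtain ⟨a, ha, -, -⟩ := (hSnd j _).1 hmem
            omega
        · refine ⟨idx (v 1), Finset.mem_univ _, ?_⟩
          rw [hmemP']
          constructor
          · right
            exact (hFst _ _).2 ⟨0, by omega, rfl, rfl⟩
          · intro hmem
            obtain ⟨a, ha, -, heq⟩ := (hSnd _ _).1 hmem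
            have := hvinj 0 (a+1) (by omega) (by omega) heq
            omega
      · obtain ⟨i₀, hP0⟩ := hPmem huS
        by_cases hcase : ∃ a, a + 1 < m ∧ u = v (a+1)
        · obtain ⟨a, ha, rfl⟩ := hcase
          have hidx0 : idx (v (a+1)) = i₀ := hidx _ _ hP0
          by_cases ha2 : a + 2 < m
          · refine ⟨idx (v (a+2)), Finset.mem_univ _, ?_⟩
            rw [hmemP']
            constructor
            · right
              exact (hFst _ _).2 ⟨a+1, ha2, rfl, rfl⟩
            · intro hmem
              obtain ⟨b, hb, hib, heq⟩ := (hSnd _ _).1 hmem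
              have hab : a = b := by
                have := hvinj (a+1) (b+1) (by omega) (by omega) heq
                omega
              subst hab
              have hdep := (hpp (a+1) ha2).2.1
              have hnm := MyAux.not_mem_of_dep_insert (hind _) hdep
              rw [← hib, hidx0] at hnm
              exact hnm hP0
          · -- a + 1 = m - 1
            refine ⟨j, Finset.mem_univ _, ?_⟩
            rw [hmemP']
            constructor
            · left
              rw [hAj, show m - 1 = a + 1 from by omega]
              exact Finset.mem_insert_self _ _
            · intro hmem
              obtain ⟨b, hb, hib, heq⟩ := (hSnd j _).1 hmem
              have hab : a = b := by
                have := hvinj (a+1) (b+1) (by omega) (by omega) heq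
                omega
              subst hab
              rw [hidx0] at hib
              subst hib
              refine hlastE.1 ?_
              rwa [show m - 1 = a + 1 from by omega]
        · refine ⟨i₀, Finset.mem_univ _, ?_⟩
          rw [hmemP']
          constructor
          · left
            exact hPA i₀ hP0
          · intro hmem
            obtain ⟨a, ha, -, heq⟩ := (hSnd _ _).1 hmem
            exact hcase ⟨a, ha, heq⟩
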